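/- Let 0 < α < 1 be irrational and let μ be uniform on {α, 1}. If π is any stationary probability distribution for the process x_{k+1} = |θ_{k+1} − x_k|, then π has no atoms; in particular π({0}) = 0 and π({nα mod 1}) = 0 for all integers n. -/

import Mathlib

open MeasureTheory ENNReal Set


private lemma stmt10_finite_big (f : ℝ → ℝ)
    (hsum : ∀ u : Finset ℝ, ∑ x ∈ u, f x ≤ 1) (c : ℝ) (hc : 0 < c) :
    {x : ℝ | c ≤ f x}.Finite := by
  by_contra hinf
  have hinf' : {x : ℝ | c ≤ f x}.Infinite := hinf
  obtain ⟨n, hn⟩ := exists_nat_gt (1 / c)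
  obtain ⟨u, hu, hcard⟩ := hinf'.exists_subset_card_eq n
  have h1 : (n : ℝ) * c ≤ ∑ x ∈ u, f x := by
    have := Finset.card_nsmul_le_sum u f c (fun x hx => hu hx)
    rwa [hcard, nsmul_eq_mul] at this
  have h2 : (1:ℝ) < n * c := by
    rw [div_lt_iff₀ hc] at hn
    linarith
  linarith [hsum u]

private lemma stmt10_sup_attained (f : ℝ → ℝ)
    (hsum : ∀ u : Finset ℝ, ∑ x ∈ u, f x ≤ 1)
    (A : Set ℝ) (hA : A.Nonempty) (hpos : 0 < sSup (f '' A)) :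
    ∃ x ∈ A, f x = sSup (f '' A) := by
  set s := sSup (f '' A) with hs
  have hbdd : BddAbove (f '' A) := by
    refine ⟨1, ?_⟩
    rintro y ⟨x, -, rfl⟩
    have := hsum {x}
    simpa using this
  obtain ⟨y, ⟨x, hxA, rfl⟩, hy⟩ := exists_lt_of_lt_csSup (hA.image f)
    (show s/2 < s by linarith)
  set F := A ∩ {z | s/2 ≤ f z} with hF
  have hFfin : F.Finite :=
    (stmt10_finite_big f hsum (s/2) (by linarith)).subset inter_subset_right
  have hFne : F.Nonempty := ⟨x, hxA, hy.le⟩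
  obtain ⟨x₀, hx₀F, hmax⟩ := Set.Finite.exists_maximalFor f F hFfin hFne
  refine ⟨x₀, hx₀F.1, le_antisymm (le_csSup hbdd ⟨x₀, hx₀F.1, rfl⟩) ?_⟩
  refine csSup_le (hA.image f) ?_
  rintro y ⟨z, hzA, rfl⟩
  by_cases hz : s/2 ≤ f z
  · by_contra hlt
    push_neg at hlt
    have := hmax (j := z) ⟨hzA, hz⟩ hlt.le
    linarith
  · push_neg at hz
    have : s/2 ≤ f x₀ := hx₀F.2
    linarith

private def stmt10_iter {T : Type} (init : T) (step : T → T) : ℕ → T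
  | 0 => init
  | n + 1 => step (stmt10_iter init step n)

private lemma stmt10_orbit1 (α : ℝ) (hirr : Irrational α) (P : Set ℝ) (hPfin : P.Finite)
    (x₀ : ℝ) (hx₀ : x₀ ∈ P)
    (hstep : ∀ x ∈ P, ∃ x' ∈ P, ∃ a b : ℕ, 1 ≤ a ∧ x' = x + a - b * α) : False := by
  classical
  choose g hg a b ha hab using hstep
  set step : {y : ℝ // y ∈ P} × ℕ × ℕ → {y : ℝ // y ∈ P} × ℕ × ℕ :=
    fun q => (⟨g q.1.1 q.1.2, hg q.1.1 q.1.2⟩, q.2.1 + a q.1.1 q.1.2, q.2.2 + b q.1.1 q.1.2)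
    with hstepdef
  set S : ℕ → {y : ℝ // y ∈ P} × ℕ × ℕ := stmt10_iter (⟨⟨x₀, hx₀⟩, 0, 0⟩) step with hSdef
  have hS : ∀ n, S (n + 1) = step (S n) := fun n => rfl
  have hS0 : S 0 = (⟨⟨x₀, hx₀⟩, 0, 0⟩) := rfl
  have hval : ∀ n, ((S n).1.1 : ℝ) = x₀ + ((S n).2.1 : ℝ) - ((S n).2.2 : ℝ) * α := by
    intro n
    induction n with
    | zero => rw [hS0]; push_cast; ring
    | succ m ih =>
      rw [hS m, hstepdef]
      have h1 : (step (S m)).1.1 = g (S m).1.1 (S m).1.2 := rfl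
      have h2 : (step (S m)).2.1 = (S m).2.1 + a (S m).1.1 (S m).1.2 := rfl
      have h3 : (step (S m)).2.2 = (S m).2.2 + b (S m).1.1 (S m).1.2 := rfl
      rw [hab (S m).1.1 (S m).1.2] at h1
      rw [h1, h2, h3]
      push_cast
      linarith [ih]
  have hAmono : StrictMono (fun n => (S n).2.1) := by
    apply strictMono_nat_of_lt_succ
    intro n
    have h2 : (S (n+1)).2.1 = (S n).2.1 + a (S n).1.1 (S n).1.2 := rfl
    have := ha (S n).1.1 (S n).1.2
    omega
  have hBmono : Monotone (fun n => (S n).2.2) := by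
    apply monotone_nat_of_le_succ
    intro n
    have h3 : (S (n+1)).2.2 = (S n).2.2 + b (S n).1.1 (S n).1.2 := rfl
    omega
  have key : ∀ n m : ℕ, n < m → (S n).1 = (S m).1 → False := by
    intro n m hlt heq
    have hv : x₀ + ((S n).2.1 : ℝ) - ((S n).2.2 : ℝ) * α
        = x₀ + ((S m).2.1 : ℝ) - ((S m).2.2 : ℝ) * α := by
      rw [← hval, ← hval, heq]
    have hAlt : (S n).2.1 < (S m).2.1 := hAmono hlt
    have hBle : (S n).2.2 ≤ (S m).2.2 := hBmono hlt.le
    have heq2 : (((S m).2.1 - (S n).2.1 : ℕ) : ℝ) = (((S m).2.2 - (S n).2.2 : ℕ) : ℝ) * α := by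
      rw [Nat.cast_sub hAlt.le, Nat.cast_sub hBle]
      push_cast
      linarith
    have hppos : 0 < (S m).2.1 - (S n).2.1 := by omega
    have hqne : ((S m).2.2 - (S n).2.2 : ℕ) ≠ 0 := by
      intro h
      rw [h] at heq2
      simp at heq2
      omega
    refine hirr ⟨(((S m).2.1 - (S n).2.1 : ℕ) : ℚ) / (((S m).2.2 - (S n).2.2 : ℕ) : ℚ), ?_⟩
    push_cast
    rw [div_eq_iff (by exact_mod_cast hqne)]
    push_cast at heq2
    linarith
  haveI : Finite {y : ℝ // y ∈ P} := hPfin.to_subtype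
  obtain ⟨n, m, hnm, hFeq⟩ := Finite.exists_ne_map_eq_of_infinite (fun n => (S n).1)
  rcases hnm.lt_or_gt with h | h
  · exact key n m h hFeq
  · exact key m n h hFeq.symm

private lemma stmt10_orbit2 (α : ℝ) (hirr : Irrational α) (P : Set ℝ) (hPfin : P.Finite)
    (x₀ : ℝ) (hx₀ : x₀ ∈ P)
    (hstep : ∀ x ∈ P, ∃ x' ∈ P, ∃ a b : ℕ, 1 ≤ a ∧ x' = x + b * α - a) : False := by
  classical
  choose g hg a b ha hab using hstep
  set step : {y : ℝ // y ∈ P} × ℕ × ℕ → {y : ℝ // y ∈ P} × ℕ × ℕ :=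
    fun q => (⟨g q.1.1 q.1.2, hg q.1.1 q.1.2⟩, q.2.1 + a q.1.1 q.1.2, q.2.2 + b q.1.1 q.1.2)
    with hstepdef
  set S : ℕ → {y : ℝ // y ∈ P} × ℕ × ℕ := stmt10_iter (⟨⟨x₀, hx₀⟩, 0, 0⟩) step with hSdef
  have hS : ∀ n, S (n + 1) = step (S n) := fun n => rfl
  have hS0 : S 0 = (⟨⟨x₀, hx₀⟩, 0, 0⟩) := rfl
  have hval : ∀ n, ((S n).1.1 : ℝ) = x₀ + ((S n).2.2 : ℝ) * α - ((S n).2.1 : ℝ) := by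
    intro n
    induction n with
    | zero => rw [hS0]; push_cast; ring
    | succ m ih =>
      rw [hS m, hstepdef]
      have h1 : (step (S m)).1.1 = g (S m).1.1 (S m).1.2 := rfl
      have h2 : (step (S m)).2.1 = (S m).2.1 + a (S m).1.1 (S m).1.2 := rfl
      have h3 : (step (S m)).2.2 = (S m).2.2 + b (S m).1.1 (S m).1.2 := rfl
      rw [hab (S m).1.1 (S m).1.2] at h1
      rw [h1, h2, h3]
      push_cast
      linarith [ih]
  have hAmono : StrictMono (fun n => (S n).2.1) := by
    apply strictMono_nat_of_lt_succ
    intro n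
    have h2 : (S (n+1)).2.1 = (S n).2.1 + a (S n).1.1 (S n).1.2 := rfl
    have := ha (S n).1.1 (S n).1.2
    omega
  have hBmono : Monotone (fun n => (S n).2.2) := by
    apply monotone_nat_of_le_succ
    intro n
    have h3 : (S (n+1)).2.2 = (S n).2.2 + b (S n).1.1 (S n).1.2 := rfl
    omega
  have key : ∀ n m : ℕ, n < m → (S n).1 = (S m).1 → False := by
    intro n m hlt heq
    have hv : x₀ + ((S n).2.2 : ℝ) * α - ((S n).2.1 : ℝ)
        = x₀ + ((S m).2.2 : ℝ) * α - ((S m).2.1 : ℝ) := by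
      rw [← hval, ← hval, heq]
    have hAlt : (S n).2.1 < (S m).2.1 := hAmono hlt
    have hBle : (S n).2.2 ≤ (S m).2.2 := hBmono hlt.le
    have heq2 : (((S m).2.1 - (S n).2.1 : ℕ) : ℝ) = (((S m).2.2 - (S n).2.2 : ℕ) : ℝ) * α := by
      rw [Nat.cast_sub hAlt.le, Nat.cast_sub hBle]
      push_cast
      linarith
    have hppos : 0 < (S m).2.1 - (S n).2.1 := by omega
    have hqne : ((S m).2.2 - (S n).2.2 : ℕ) ≠ 0 := by
      intro h
      rw [h] at heq2
      simp at heq2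
      omega
    refine hirr ⟨(((S m).2.1 - (S n).2.1 : ℕ) : ℚ) / (((S m).2.2 - (S n).2.2 : ℕ) : ℚ), ?_⟩
    push_cast
    rw [div_eq_iff (by exact_mod_cast hqne)]
    push_cast at heq2
    linarith
  haveI : Finite {y : ℝ // y ∈ P} := hPfin.to_subtype
  obtain ⟨n, m, hnm, hFeq⟩ := Finite.exists_ne_map_eq_of_infinite (fun n => (S n).1)
  rcases hnm.lt_or_gt with h | h
  · exact key n m h hFeq
  · exact key m n h hFeq.symm

private lemma stmt10_case_lt (α : ℝ) (h0 : 0 < α) (hh : α < 1/2) (hirr : Irrational α)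
    (f : ℝ → ℝ) (hf0 : ∀ x, 0 ≤ f x)
    (hsum : ∀ u : Finset ℝ, ∑ x ∈ u, f x ≤ 1)
    (he1 : ∀ x : ℝ, 0 < x → 2 * f x = f (α - x) + f (α + x) + f (1 - x) + f (1 + x))
    (he0 : 2 * f 0 = f α + f 1)
    (hsupp : ∀ x : ℝ, (x < 0 ∨ 1 < x) → f x = 0) :
    ∀ x, f x = 0 := by
  classical
  have h1 : α < 1 := by linarith
  have hrat : ∀ p q : ℕ, 0 < q → (q : ℝ) * α = (p : ℝ) → False := by
    intro p q hq he
    refine hirr ⟨(p : ℚ) / (q : ℚ), ?_⟩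
    push_cast
    rw [div_eq_iff (by positivity)]
    linarith
  set s := sSup (f '' Ioo 0 α) with hs_def
  set t := sSup (f '' Ioc α 1) with ht_def
  have hbddA : BddAbove (f '' Ioo 0 α) := by
    refine ⟨1, ?_⟩; rintro y ⟨x, -, rfl⟩; simpa using hsum {x}
  have hbddT : BddAbove (f '' Ioc α 1) := by
    refine ⟨1, ?_⟩; rintro y ⟨x, -, rfl⟩; simpa using hsum {x}
  have les : ∀ x ∈ Ioo 0 α, f x ≤ s := fun x hx => le_csSup hbddA ⟨x, hx, rfl⟩
  have let_ : ∀ x ∈ Ioc α 1, f x ≤ t := fun x hx => le_csSup hbddT ⟨x, hx, rfl⟩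
  have s0 : 0 ≤ s := le_trans (hf0 (α/2)) (les (α/2) ⟨by linarith, by linarith⟩)
  have t0 : 0 ≤ t := le_trans (hf0 1) (let_ 1 ⟨by linarith, le_refl 1⟩)
  -- basic identities
  have B0 : 2 * f 1 = f 0 := by
    have h := he1 1 one_pos
    have z1 : f (α - 1) = 0 := hsupp _ (Or.inl (by linarith))
    have z2 : f (α + 1) = 0 := hsupp _ (Or.inr (by linarith))
    have z3 : f (1 + 1) = 0 := hsupp _ (Or.inr (by norm_num))
    have e : (1:ℝ) - 1 = 0 := by norm_num
    rw [e] at h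
    linarith
  have B1 : 3 * f 0 = 2 * f α := by linarith
  have L1 : ∀ x ∈ Ioo 0 α, 2 * f (1 - x) = f x := by
    rintro x ⟨hx0, hxα⟩
    have h := he1 (1 - x) (by linarith)
    have z1 : f (α - (1 - x)) = 0 := hsupp _ (Or.inl (by linarith))
    have z2 : f (α + (1 - x)) = 0 := hsupp _ (Or.inr (by linarith))
    have z3 : f (1 + (1 - x)) = 0 := hsupp _ (Or.inr (by linarith))
    have e : (1:ℝ) - (1 - x) = x := by ring
    rw [e] at h
    linarith
  have L2 : ∀ x ∈ Ioo 0 α, 3 * f x = 2 * f (α - x) + 2 * f (α + x) := by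
    rintro x hx
    obtain ⟨hx0, hxα⟩ := hx
    have h := he1 x hx0
    have z1 : f (1 + x) = 0 := hsupp _ (Or.inr (by linarith))
    have h2 := L1 x ⟨hx0, hxα⟩
    linarith
  have L4 : ∀ y : ℝ, α < y → y ≤ 1 → 2 * f y = f (α + y) + f (1 - y) := by
    intro y hy1 hy2
    have h := he1 y (by linarith)
    have z1 : f (α - y) = 0 := hsupp _ (Or.inl (by linarith))
    have z2 : f (1 + y) = 0 := hsupp _ (Or.inr (by linarith))
    linarith
  have L3 : 4 * f α = 3 * f (α + α) + 3 * f (1 - α) := by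
    have h := he1 α h0
    have e : α - α = 0 := by ring
    rw [e] at h
    have z1 : f (1 + α) = 0 := hsupp _ (Or.inr (by linarith))
    linarith
  have L5 : 2 * f α ≤ 3 * t := by
    have b1 : f (α + α) ≤ t := let_ _ ⟨by linarith, by linarith⟩
    have b2 : f (1 - α) ≤ t := let_ _ ⟨by linarith, by linarith⟩
    linarith
  have L7 : ∀ y : ℝ, α < y → y < 1 - α → f y = t → f (α + y) = t := by
    intro y hy1 hy2 hfy
    have h := L4 y hy1 (by linarith)
    have b1 : f (1 - y) ≤ t := let_ _ ⟨by linarith, by linarith⟩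
    have b2 : f (α + y) ≤ t := let_ _ ⟨by linarith, by linarith⟩
    linarith
  -- the climbing lemma
  have hclimb : ∀ y₀ : ℝ, α < y₀ → y₀ ≤ 1 → f y₀ = t →
      ∃ K : ℕ, f (y₀ + K * α) = t ∧ 1 - α ≤ y₀ + K * α ∧ y₀ + K * α ≤ 1 := by
    intro y₀ hy₀1 hy₀2 hfy₀
    have hex : ∃ k : ℕ, 1 - α ≤ y₀ + k * α := by
      obtain ⟨k, hk⟩ := exists_nat_ge ((1 - α - y₀) / α)
      refine ⟨k, ?_⟩
      rw [div_le_iff₀ h0] at hk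
      linarith
    set K := Nat.find hex with hK_def
    have hKspec : 1 - α ≤ y₀ + K * α := Nat.find_spec hex
    have haux : ∀ j : ℕ, j ≤ K → f (y₀ + j * α) = t ∧ y₀ + j * α ≤ 1 := by
      intro j
      induction j with
      | zero => intro _; constructor <;> simp [hfy₀, hy₀2]
      | succ m ih =>
        intro hle
        have hmK : m < K := Nat.lt_of_lt_of_le (Nat.lt_succ_self m) hle
        have hnq : ¬ (1 - α ≤ y₀ + m * α) := Nat.find_min hex hmK
        push_neg at hnq
        obtain ⟨hfm, hm1⟩ := ih hmK.le
        have hma : (0:ℝ) ≤ (m:ℝ) * α := by positivity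
        have := L7 (y₀ + m * α) (by linarith) hnq hfm
        constructor
        · have e : α + (y₀ + m * α) = y₀ + ((m:ℕ) + 1 : ℕ) * α := by push_cast; ring
          rw [e] at this
          exact this
        · push_cast
          linarith
    exact ⟨K, (haux K le_rfl).1, hKspec, (haux K le_rfl).2⟩
  -- consequence used in several dead-end branches: f at 1 being maximal kills t
  have hky1 : 0 < t → f 1 = t → False := by
    intro ht hf1
    have : f 0 = 2 * t := by linarith
    have : 2 * f α = 6 * t := by linarith
    linarith
  -- dead-end branch at 1 - α
  have hdead : 0 < t → f (1 - α) = t →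
      (2 * f α = 3 * t) ∧ f (α + α) = t := by
    intro ht hfa
    have h14 := L4 (1 - α) (by linarith) (by linarith)
    rw [show α + (1 - α) = (1:ℝ) by ring, show (1:ℝ) - (1 - α) = α by ring] at h14
    -- 2 t = f 1 + f α
    have hfa2 : 2 * f α = 3 * t := by linarith
    have : f (α + α) = t := by
      have b2 : f (1 - α) = t := hfa
      linarith [L3]
    exact ⟨hfa2, this⟩
  -- main bound : t ≤ s/2
  have Tmain : 0 < t → 2 * t ≤ s := by
    intro ht
    obtain ⟨y₁, hy₁, hfy₁⟩ := stmt10_sup_attained f hsum (Ioc α 1) ⟨1, by constructor <;> linarith⟩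
      (by rw [← ht_def]; exact ht)
    rw [← ht_def] at hfy₁
    set M := Ioc α 1 ∩ {y : ℝ | f y = t} with hM_def
    have hMfin : M.Finite := by
      refine (stmt10_finite_big f hsum t ht).subset ?_
      rintro y ⟨-, hy⟩
      exact le_of_eq hy.symm
    have hMne : M.Nonempty := ⟨y₁, hy₁, hfy₁⟩
    obtain ⟨ym, hymM, hymmax⟩ := Set.Finite.exists_maximalFor id M hMfin hMne
    have hmax : ∀ y ∈ M, y ≤ ym := by
      intro y hy
      by_contra hgt
      push_neg at hgt
      have := hymmax (j := y) hy hgt.le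
      simp only [id] at this
      linarith
    obtain ⟨⟨hym1, hym2⟩, hymf⟩ := hymM
    simp only [mem_setOf_eq] at hymf
    rcases lt_trichotomy ym (1 - α) with hcase | hcase | hcase
    · -- climb one step : contradiction with maximality
      exfalso
      have := L7 ym hym1 hcase hymf
      have hmem : (α + ym) ∈ M := ⟨⟨by linarith, by linarith⟩, this⟩
      have := hmax _ hmem
      linarith
    · -- ym = 1 - α
      exfalso
      have hfa : f (1 - α) = t := by rw [← hcase]; exact hymf
      obtain ⟨hfa2, hf2a⟩ := hdead ht hfa
      obtain ⟨K, hK1, hK2, hK3⟩ := hclimb (α + α) (by linarith) (by linarith) hf2a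
      have hKc : (0:ℝ) ≤ (K:ℝ) * α := by positivity
      have hmem : (α + α + K * α) ∈ M := ⟨⟨by linarith, hK3⟩, hK1⟩
      have hle := hmax _ hmem
      have : α + α + K * α = 1 - α := by
        rw [hcase] at hle
        linarith
      exact hrat 1 (K + 3) (by omega) (by push_cast; linarith)
    · -- ym > 1 - α
      rcases eq_or_lt_of_le hym2 with hy1 | hy1
      · exact absurd (hky1 ht (by rw [hy1] at hymf; exact hymf)) (fun h => h)
      · have h := L4 ym hym1 hym2
        have z : f (α + ym) = 0 := hsupp _ (Or.inr (by linarith))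
        have hb : f (1 - ym) ≤ s := les _ ⟨by linarith, by linarith⟩
        linarith
  -- main contradiction from s > 0
  have Smain : ¬ (0 < s) := by
    intro hs
    obtain ⟨x₁, hx₁, hfx₁⟩ := stmt10_sup_attained f hsum (Ioo 0 α)
      ⟨α/2, by constructor <;> linarith⟩ (by rw [← hs_def]; exact hs)
    rw [← hs_def] at hfx₁
    set P := Ioo 0 α ∩ {x : ℝ | f x = s} with hP_def
    have hPfin : P.Finite := by
      refine (stmt10_finite_big f hsum s hs).subset ?_
      rintro y ⟨-, hy⟩
      exact le_of_eq hy.symm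
    have hPne : x₁ ∈ P := ⟨hx₁, hfx₁⟩
    -- t = s/2
    have hts : 2 * t = s := by
      have h := L2 x₁ hx₁
      rw [hfx₁] at h
      have b1 : f (α - x₁) ≤ s := les _ ⟨by linarith [hx₁.2], by linarith [hx₁.1]⟩
      have b2 : f (α + x₁) ≤ t := let_ _ ⟨by linarith [hx₁.1], by linarith [hx₁.2]⟩
      have hst : s ≤ 2 * t := by linarith
      have ht : 0 < t := by linarith
      have := Tmain ht
      linarith
    have ht : 0 < t := by linarith
    -- the step lemma
    have hstep : ∀ x ∈ P, ∃ x' ∈ P, ∃ a b : ℕ, 1 ≤ a ∧ x' = x + a - b * α := by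
      rintro x ⟨⟨hx0, hxα⟩, hxf⟩
      simp only [mem_setOf_eq] at hxf
      -- σ-closure
      have h2 := L2 x ⟨hx0, hxα⟩
      have b1 : f (α - x) ≤ s := les _ ⟨by linarith, by linarith⟩
      have b2 : f (α + x) ≤ t := let_ _ ⟨by linarith, by linarith⟩
      have hσ : f (α - x) = s := by linarith
      -- exactness at σ x
      have h2' := L2 (α - x) ⟨by linarith, by linarith⟩
      rw [show α - (α - x) = x by ring] at h2'
      have hz : f (α + (α - x)) = t := by linarith
      -- climb
      obtain ⟨K, hK1, hK2, hK3⟩ := hclimb (α + (α - x)) (by linarith) (by linarith) hz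
      set yK := α + (α - x) + K * α with hyK_def
      rcases eq_or_lt_of_le hK3 with hyK1 | hyK1
      · -- yK = 1 : dead end
        exfalso
        exact hky1 ht (by rw [← hyK1]; exact hK1)
      rcases eq_or_lt_of_le hK2 with hyKa | hyKa
      · -- yK = 1 - α : detour
        have hfa : f (1 - α) = t := by rw [hyKa]; exact hK1
        obtain ⟨hfa2, hf2a⟩ := hdead ht hfa
        obtain ⟨K', hK1', hK2', hK3'⟩ := hclimb (α + α) (by linarith) (by linarith) hf2a
        set yK' := α + α + K' * α with hyK'_def
        rcases eq_or_lt_of_le hK3' with hyK1' | hyK1'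
        · -- yK' = 1 : rational relation
          exact absurd (hrat 1 (K' + 2) (by omega) (by push_cast; linarith)) (fun h => h.elim)
        rcases eq_or_lt_of_le hK2' with hyKa' | hyKa'
        · -- yK' = 1 - α : rational relation
          exact absurd (hrat 1 (K' + 3) (by omega) (by push_cast; linarith)) (fun h => h.elim)
        · -- 1 - α < yK' < 1 : return point
          have h4 := L4 yK' (by linarith) (by linarith)
          have z : f (α + yK') = 0 := hsupp _ (Or.inr (by linarith))
          have hret : f (1 - yK') = s := by linarith
          refine ⟨1 - yK', ⟨⟨by linarith, by linarith⟩, hret⟩, 2, K + K' + 5, by norm_num, ?_⟩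
          have htrig : α + (α - x) + K * α = 1 - α := hyKa.symm
          push_cast
          linarith [hyK'_def]
      · -- normal return
        have h4 := L4 yK (by linarith) (by linarith)
        have z : f (α + yK) = 0 := hsupp _ (Or.inr (by linarith))
        have hret : f (1 - yK) = s := by linarith
        refine ⟨1 - yK, ⟨⟨by linarith, by linarith⟩, hret⟩, 1, K + 2, le_refl 1, ?_⟩
        push_cast
        linarith [hyK_def]
    exact stmt10_orbit1 α hirr P hPfin x₁ hPne hstep
  -- conclude : everything vanishes
  have hs0 : s = 0 := le_antisymm (not_lt.mp Smain) s0
  have ht0 : t = 0 := by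
    by_contra hne
    have ht : 0 < t := lt_of_le_of_ne t0 (Ne.symm hne)
    have := Tmain ht
    linarith [hs0]
  have hfα : f α = 0 := by
    have := L5
    have := hf0 α
    linarith [ht0]
  have hf0' : f 0 = 0 := by linarith [B1, hfα, hf0 0]
  have hf1 : f 1 = 0 := by linarith [B0, hf0']
  intro x
  rcases lt_trichotomy x 0 with hx | hx | hx
  · exact hsupp x (Or.inl hx)
  · rw [hx]; exact hf0'
  rcases lt_trichotomy x α with hxa | hxa | hxa
  · refine le_antisymm ?_ (hf0 x)
    calc f x ≤ s := les x ⟨hx, hxa⟩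
      _ = 0 := hs0
  · rw [hxa]; exact hfα
  rcases le_or_gt x 1 with hx1 | hx1
  · refine le_antisymm ?_ (hf0 x)
    calc f x ≤ t := let_ x ⟨hxa, hx1⟩
      _ = 0 := ht0
  · exact hsupp x (Or.inr hx1)

private lemma stmt10_case_gt (α : ℝ) (hh : 1/2 < α) (h1 : α < 1) (hirr : Irrational α)
    (f : ℝ → ℝ) (hf0 : ∀ x, 0 ≤ f x)
    (hsum : ∀ u : Finset ℝ, ∑ x ∈ u, f x ≤ 1)
    (he1 : ∀ x : ℝ, 0 < x → 2 * f x = f (α - x) + f (α + x) + f (1 - x) + f (1 + x))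
    (he0 : 2 * f 0 = f α + f 1)
    (hsupp : ∀ x : ℝ, (x < 0 ∨ 1 < x) → f x = 0) :
    ∀ x, f x = 0 := by
  classical
  have h0 : 0 < α := by linarith
  set s := sSup (f '' Ioo 0 α) with hs_def
  have hbddA : BddAbove (f '' Ioo 0 α) := by
    refine ⟨1, ?_⟩; rintro y ⟨x, -, rfl⟩; simpa using hsum {x}
  have les : ∀ x ∈ Ioo 0 α, f x ≤ s := fun x hx => le_csSup hbddA ⟨x, hx, rfl⟩
  have s0 : 0 ≤ s := le_trans (hf0 (α/2)) (les (α/2) ⟨by linarith, by linarith⟩)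
  have B0 : 2 * f 1 = f 0 := by
    have h := he1 1 one_pos
    have z1 : f (α - 1) = 0 := hsupp _ (Or.inl (by linarith))
    have z2 : f (α + 1) = 0 := hsupp _ (Or.inr (by linarith))
    have z3 : f (1 + 1) = 0 := hsupp _ (Or.inr (by norm_num))
    have e : (1:ℝ) - 1 = 0 := by norm_num
    rw [e] at h
    linarith
  have B1 : 3 * f 0 = 2 * f α := by linarith
  have R2 : 2 * f α = f 0 + f (1 - α) := by
    have h := he1 α h0
    have e : α - α = 0 := by ring
    rw [e] at h
    have z1 : f (α + α) = 0 := hsupp _ (Or.inr (by linarith))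
    have z2 : f (1 + α) = 0 := hsupp _ (Or.inr (by linarith))
    linarith
  have hf0b : 2 * f 0 = f (1 - α) := by linarith
  have hfαb : 4 * f α = 3 * f (1 - α) := by linarith
  have hfb : f (1 - α) ≤ s := les _ ⟨by linarith, by linarith⟩
  have R1 : ∀ y : ℝ, α < y → y ≤ 1 → 2 * f y = f (1 - y) := by
    intro y hy1 hy2
    have h := he1 y (by linarith)
    have z1 : f (α - y) = 0 := hsupp _ (Or.inl (by linarith))
    have z2 : f (α + y) = 0 := hsupp _ (Or.inr (by linarith))
    have z3 : f (1 + y) = 0 := hsupp _ (Or.inr (by linarith))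
    linarith
  have R3 : ∀ y : ℝ, α < y → y ≤ 1 → 2 * f y ≤ s := by
    intro y hy1 hy2
    have h := R1 y hy1 hy2
    rcases eq_or_lt_of_le hy2 with hy | hy
    · subst hy
      have e : (1:ℝ) - 1 = 0 := by norm_num
      rw [e] at h
      linarith
    · have hb : f (1 - y) ≤ s := les _ ⟨by linarith, by linarith⟩
      linarith
  have Smain : ¬ (0 < s) := by
    intro hs
    obtain ⟨x₁, hx₁, hfx₁⟩ := stmt10_sup_attained f hsum (Ioo 0 α)
      ⟨α/2, by constructor <;> linarith⟩ (by rw [← hs_def]; exact hs)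
    rw [← hs_def] at hfx₁
    set P := Ioo 0 α ∩ {x : ℝ | f x = s} with hP_def
    have hPfin : P.Finite := by
      refine (stmt10_finite_big f hsum s hs).subset ?_
      rintro y ⟨-, hy⟩
      exact le_of_eq hy.symm
    have hPne : x₁ ∈ P := ⟨hx₁, hfx₁⟩
    have sigma : ∀ w, w ∈ Ioo 0 α → f w = s → f (α - w) = s := by
      rintro w ⟨hw0, hwα⟩ hfw
      have bσ : f (α - w) ≤ s := les _ ⟨by linarith, by linarith⟩
      rcases lt_trichotomy w (1 - α) with hc | hc | hc
      · have h := he1 w hw0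
        have z : f (1 + w) = 0 := hsupp _ (Or.inr (by linarith))
        have b2 : 2 * f (α + w) ≤ s := R3 _ (by linarith) (by linarith)
        have b3 : 2 * f (1 - w) ≤ s := R3 _ (by linarith) (by linarith)
        linarith
      · have h := he1 w hw0
        rw [hc] at h hfw ⊢
        rw [show α + (1 - α) = (1:ℝ) by ring, show (1:ℝ) - (1 - α) = α by ring] at h
        have z : f (1 + (1 - α)) = 0 := hsupp _ (Or.inr (by linarith))
        -- f 1 = s/4, f α = 3s/4
        have hq1 : 2 * f 1 = f 0 := B0
        have hq2 : 2 * f 0 = f (1 - α) := hf0b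
        have hq3 : 4 * f α = 3 * f (1 - α) := hfαb
        have bσ' : f (α - (1 - α)) ≤ s := les _ ⟨by linarith, by linarith⟩
        linarith
      · have h := he1 w hw0
        have z1 : f (α + w) = 0 := hsupp _ (Or.inr (by linarith))
        have z2 : f (1 + w) = 0 := hsupp _ (Or.inr (by linarith))
        have b : f (1 - w) ≤ s := les _ ⟨by linarith, by linarith⟩
        linarith
    have hstep : ∀ x ∈ P, ∃ x' ∈ P, ∃ a b : ℕ, 1 ≤ a ∧ x' = x + b * α - a := by
      rintro x ⟨⟨hx0, hxα⟩, hxf⟩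
      simp only [mem_setOf_eq] at hxf
      rcases lt_trichotomy x (1 - α) with hc | hc | hc
      · -- low region
        have h := he1 x hx0
        have z : f (1 + x) = 0 := hsupp _ (Or.inr (by linarith))
        have b1 : f (α - x) ≤ s := les _ ⟨by linarith, by linarith⟩
        have b2 : 2 * f (α + x) ≤ s := R3 _ (by linarith) (by linarith)
        have b3 : 2 * f (1 - x) ≤ s := R3 _ (by linarith) (by linarith)
        have hmid : 2 * f (α + x) = s := by linarith
        have hz : f (1 - (α + x)) = s := by
          have := R1 (α + x) (by linarith) (by linarith)
          linarith
        have hmem : (1 - (α + x)) ∈ Ioo 0 α := ⟨by linarith, by linarith⟩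
        have hx' := sigma _ hmem hz
        refine ⟨α - (1 - (α + x)), ⟨⟨by linarith, by linarith⟩, hx'⟩, 1, 2, le_refl 1, ?_⟩
        push_cast
        ring
      · -- boundary
        have hx' := sigma x ⟨hx0, hxα⟩ hxf
        refine ⟨α - x, ⟨⟨by linarith, by linarith⟩, hx'⟩, 2, 3, by norm_num, ?_⟩
        rw [hc]
        push_cast
        ring
      · -- middle region
        have h := he1 x hx0
        have z1 : f (α + x) = 0 := hsupp _ (Or.inr (by linarith))
        have z2 : f (1 + x) = 0 := hsupp _ (Or.inr (by linarith))
        have b1 : f (α - x) ≤ s := les _ ⟨by linarith, by linarith⟩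
        have b : f (1 - x) ≤ s := les _ ⟨by linarith, by linarith⟩
        have hz : f (1 - x) = s := by linarith
        have hx' := sigma (1 - x) ⟨by linarith, by linarith⟩ hz
        refine ⟨α - (1 - x), ⟨⟨by linarith, by linarith⟩, hx'⟩, 1, 1, le_refl 1, ?_⟩
        push_cast
        ring
    exact stmt10_orbit2 α hirr P hPfin x₁ hPne hstep
  have hs0 : s = 0 := le_antisymm (not_lt.mp Smain) s0
  have hf1α : f (1 - α) = 0 := by
    refine le_antisymm ?_ (hf0 _)
    calc f (1 - α) ≤ s := hfb
      _ = 0 := hs0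
  have hfα : f α = 0 := by linarith [hf0 α]
  have hf00 : f 0 = 0 := by linarith [hf0 0]
  have hf1 : f 1 = 0 := by linarith
  intro x
  rcases lt_trichotomy x 0 with hx | hx | hx
  · exact hsupp x (Or.inl hx)
  · rw [hx]; exact hf00
  rcases lt_trichotomy x α with hxa | hxa | hxa
  · refine le_antisymm ?_ (hf0 x)
    calc f x ≤ s := les x ⟨hx, hxa⟩
      _ = 0 := hs0
  · rw [hxa]; exact hfα
  rcases le_or_gt x 1 with hx1 | hx1
  · refine le_antisymm ?_ (hf0 x)
    have := R3 x hxa hx1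
    linarith [hs0]
  · exact hsupp x (Or.inr hx1)


/-- Lemma 5 (no atoms): for `0 < α < 1` irrational and `μ` uniform on `{α, 1}`, any
stationary probability distribution `π` of the process `x_{k+1} = |θ_{k+1} - x_k|`
has no atoms; in particular `π({0}) = 0` and `π({⟨nα⟩}) = 0` for every integer `n`. -/
theorem stmt_10 (α : ℝ) (h0 : 0 < α) (h1 : α < 1) (hirr : Irrational α)
    (μ : Measure ℝ) (hμ : μ = (2 : ℝ≥0∞)⁻¹ • (Measure.dirac α + Measure.dirac 1))
    (π : Measure ℝ) [IsProbabilityMeasure π]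
    (hstat : Measure.map (fun p : ℝ × ℝ => |p.1 - p.2|) (μ.prod π) = π) :
    (∀ x : ℝ, π {x} = 0) ∧ π {(0 : ℝ)} = 0 ∧
      ∀ n : ℤ, π {Int.fract ((n : ℝ) * α)} = 0 := by
  classical
  have hfin : ∀ s : Set ℝ, π s ≠ ⊤ := fun s => (measure_lt_top π s).ne
  -- the fundamental stationarity identity for arbitrary measurable sets
  have key : ∀ S : Set ℝ, MeasurableSet S →
      π S = 2⁻¹ * π {y | |α - y| ∈ S} + 2⁻¹ * π {y | |1 - y| ∈ S} := by
    intro S hS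
    have hmeas_abs : Measurable (fun p : ℝ × ℝ => |p.1 - p.2|) :=
      (measurable_fst.sub measurable_snd).abs
    have hpre : MeasurableSet ((fun p : ℝ × ℝ => |p.1 - p.2|) ⁻¹' S) := hmeas_abs hS
    have hmf : Measurable fun θ : ℝ => π (Prod.mk θ ⁻¹' ((fun p : ℝ × ℝ => |p.1 - p.2|) ⁻¹' S)) :=
      measurable_measure_prodMk_left hpre
    have h1 : π S = (μ.prod π) ((fun p : ℝ × ℝ => |p.1 - p.2|) ⁻¹' S) := by
      conv_lhs => rw [← hstat]
      exact Measure.map_apply hmeas_abs hS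
    rw [h1, hμ, Measure.prod_apply hpre, lintegral_smul_measure, lintegral_add_measure,
      lintegral_dirac' _ hmf, lintegral_dirac' _ hmf, smul_eq_mul, mul_add]
    rfl
  -- support: no mass below 0 or above 1
  have habs : ∀ a : ℝ, {y : ℝ | |a - y| ∈ Iio (0:ℝ)} = ∅ := by
    intro a; ext y
    simp only [mem_setOf_eq, mem_Iio, mem_empty_iff_false, iff_false, not_lt]
    exact abs_nonneg _
  have hIio : π (Iio 0) = 0 := by
    rw [key _ measurableSet_Iio, habs, habs]; simp
  have hpreIoi : ∀ a t : ℝ, 0 ≤ t → {y : ℝ | |a - y| ∈ Ioi t} = Iio (a - t) ∪ Ioi (a + t) := by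
    intro a t ht; ext y
    simp only [mem_setOf_eq, mem_Ioi, mem_union, mem_Iio, lt_abs]
    constructor
    · rintro (h | h)
      · left; linarith
      · right; linarith
    · rintro (h | h)
      · left; linarith
      · right; linarith
  have hnull : ∀ a t : ℝ, a ≤ t → π (Iio (a - t)) = 0 := by
    intro a t h
    have : Iio (a - t) ⊆ Iio (0:ℝ) := Iio_subset_Iio (by linarith)
    exact le_antisymm (le_trans (measure_mono this) hIio.le) zero_le
  have keyIoi : ∀ t : ℝ, 1 ≤ t → π (Ioi t) = 2⁻¹ * π (Ioi (α + t)) + 2⁻¹ * π (Ioi (1 + t)) := by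
    intro t ht
    have h := key (Ioi t) measurableSet_Ioi
    rw [hpreIoi α t (by linarith), hpreIoi 1 t (by linarith)] at h
    have e1 : π (Iio (α - t) ∪ Ioi (α + t)) = π (Ioi (α + t)) := by
      refine le_antisymm (le_trans (measure_union_le _ _) ?_) (measure_mono subset_union_right)
      rw [hnull α t (by linarith)]; simp
    have e2 : π (Iio (1 - t) ∪ Ioi (1 + t)) = π (Ioi (1 + t)) := by
      refine le_antisymm (le_trans (measure_union_le _ _) ?_) (measure_mono subset_union_right)
      rw [hnull 1 t ht]; simp
    rw [e1, e2] at h; exact h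
  have step : ∀ t : ℝ, 1 ≤ t → π (Ioi t) ≤ π (Ioi (α + t)) := by
    intro t ht
    have h := keyIoi t ht
    have hmono : π (Ioi (1 + t)) ≤ π (Ioi t) := measure_mono (Ioi_subset_Ioi (by linarith))
    have h2 : π (Ioi t) ≤ 2⁻¹ * π (Ioi (α + t)) + 2⁻¹ * π (Ioi t) := by
      conv_lhs => rw [h]
      gcongr _ + _ * ?_
    have h3 : 2⁻¹ * π (Ioi t) + 2⁻¹ * π (Ioi t) ≤ 2⁻¹ * π (Ioi (α + t)) + 2⁻¹ * π (Ioi t) := by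
      calc 2⁻¹ * π (Ioi t) + 2⁻¹ * π (Ioi t) = π (Ioi t) := by
            rw [← add_mul, ENNReal.inv_two_add_inv_two, one_mul]
        _ ≤ _ := h2
    have h4 := (ENNReal.add_le_add_iff_right
      (ENNReal.mul_ne_top (by norm_num) (hfin _))).1 h3
    exact (ENNReal.mul_le_mul_iff_right (a := (2:ℝ≥0∞)⁻¹) (by norm_num) (by norm_num)).1 h4
  have iter : ∀ k : ℕ, π (Ioi 1) ≤ π (Ioi (1 + k * α)) := by
    intro k; induction k with
    | zero => simp
    | succ n ih =>
      have h1k : (1:ℝ) ≤ 1 + n * α := by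
        have : (0:ℝ) ≤ (n:ℝ) * α := by positivity
        linarith
      have := le_trans ih (step _ h1k)
      have heq : α + (1 + n * α) = 1 + (n + 1 : ℕ) * α := by push_cast; ring
      rwa [heq] at this
  have hlim : Filter.Tendsto (fun n : ℕ => π (Ioi (n : ℝ))) Filter.atTop (nhds 0) := by
    have h := MeasureTheory.tendsto_measure_iInter_atTop
      (μ := π) (s := fun n : ℕ => Ioi (n : ℝ))
      (fun n => measurableSet_Ioi.nullMeasurableSet)
      (fun n m hnm => Ioi_subset_Ioi (by exact_mod_cast hnm))
      ⟨0, hfin _⟩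
    have hempty : ⋂ n : ℕ, Ioi ((n : ℝ)) = ∅ := by
      ext y; simp only [mem_iInter, mem_Ioi, mem_empty_iff_false, iff_false, not_forall, not_lt]
      obtain ⟨n, hn⟩ := exists_nat_gt y
      exact ⟨n, hn.le⟩
    rw [hempty] at h; simpa [Function.comp_def] using h
  have hIoi : π (Ioi 1) = 0 := by
    have hle : ∀ n : ℕ, π (Ioi 1) ≤ π (Ioi (n : ℝ)) := by
      intro n
      obtain ⟨k, hk⟩ := exists_nat_ge ((n : ℝ) / α)
      have hnk : (n : ℝ) ≤ 1 + k * α := by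
        have := (div_le_iff₀ h0).1 hk
        linarith
      exact le_trans (iter k) (measure_mono (Ioi_subset_Ioi hnk))
    exact le_antisymm (ge_of_tendsto hlim (Filter.Eventually.of_forall hle)) zero_le
  -- pointwise stationarity identities
  have hpair : ∀ a x : ℝ, 0 < x → π {y | |a - y| ∈ ({x} : Set ℝ)} = π {a - x} + π {a + x} := by
    intro a x hx
    have hset : {y : ℝ | |a - y| ∈ ({x} : Set ℝ)} = {a - x} ∪ {a + x} := by
      ext y
      simp only [mem_setOf_eq, mem_singleton_iff, mem_union, abs_eq hx.le]
      constructor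
      · rintro (h | h)
        · left; linarith
        · right; linarith
      · rintro (h | h)
        · left; linarith
        · right; linarith
    rw [hset, measure_union (by simp [Set.disjoint_singleton]; intro h; linarith)
      (measurableSet_singleton _)]
  have keyPt : ∀ x : ℝ, 0 < x →
      π {x} = 2⁻¹ * (π {α - x} + π {α + x}) + 2⁻¹ * (π {1 - x} + π {1 + x}) := by
    intro x hx
    have h := key {x} (measurableSet_singleton x)
    rwa [hpair α x hx, hpair 1 x hx] at h
  have keyPt0 : π {(0:ℝ)} = 2⁻¹ * π {α} + 2⁻¹ * π {(1:ℝ)} := by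
    have h := key {0} (measurableSet_singleton 0)
    have hset : ∀ a : ℝ, {y : ℝ | |a - y| ∈ ({0} : Set ℝ)} = {a} := by
      intro a; ext y
      simp only [mem_setOf_eq, mem_singleton_iff, abs_eq_zero, sub_eq_zero]
      exact eq_comm
    rwa [hset α, hset 1] at h
  -- pass to real-valued atom masses
  set f : ℝ → ℝ := fun x => (π {x}).toReal with hf
  have hf0 : ∀ x, 0 ≤ f x := fun x => ENNReal.toReal_nonneg
  have he1 : ∀ x : ℝ, 0 < x → 2 * f x = f (α - x) + f (α + x) + f (1 - x) + f (1 + x) := by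
    intro x hx
    have h := keyPt x hx
    have := congrArg ENNReal.toReal h
    rw [ENNReal.toReal_add (by finiteness) (by finiteness), ENNReal.toReal_mul,
      ENNReal.toReal_mul, ENNReal.toReal_add (hfin _) (hfin _),
      ENNReal.toReal_add (hfin _) (hfin _)] at this
    simp only [ENNReal.toReal_inv, ENNReal.toReal_ofNat] at this
    simp only [hf]
    linarith [this]
  have he0 : 2 * f 0 = f α + f 1 := by
    have := congrArg ENNReal.toReal keyPt0
    rw [ENNReal.toReal_add (by finiteness) (by finiteness), ENNReal.toReal_mul,
      ENNReal.toReal_mul] at this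
    simp only [ENNReal.toReal_inv, ENNReal.toReal_ofNat] at this
    simp only [hf]
    linarith [this]
  have hsupp : ∀ x : ℝ, (x < 0 ∨ 1 < x) → f x = 0 := by
    intro x hx
    have : π {x} = 0 := by
      rcases hx with hx | hx
      · exact le_antisymm (le_trans (measure_mono (by simpa using hx)) hIio.le) zero_le
      · exact le_antisymm (le_trans (measure_mono (by simpa using hx)) hIoi.le) zero_le
    simp [hf, this]
  have hsum : ∀ u : Finset ℝ, ∑ x ∈ u, f x ≤ 1 := by
    intro u
    have h1 : (∑ x ∈ u, π {x}) = π (↑u : Set ℝ) := by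
      rw [← measure_biUnion_finset ?_ (fun b _ => measurableSet_singleton b)]
      · congr 1
        ext y
        simp
      · intro x _ y _ hxy
        simp [Function.onFun, Set.disjoint_singleton, hxy]
    have h2 : ∑ x ∈ u, f x = (∑ x ∈ u, π {x}).toReal := by
      rw [ENNReal.toReal_sum (fun a _ => hfin _)]
    rw [h2, h1]
    have hμu := measure_mono (subset_univ (↑u : Set ℝ)) (μ := π)
    rw [measure_univ] at hμu
    calc (π ↑u).toReal ≤ (1 : ℝ≥0∞).toReal := ENNReal.toReal_mono (by norm_num) hμu
      _ = 1 := by simp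
  -- apply the combinatorial lemmas
  have hall : ∀ x, f x = 0 := by
    rcases lt_trichotomy α (1/2) with hc | hc | hc
    · exact stmt10_case_lt α h0 hc hirr f hf0 hsum he1 he0 hsupp
    · exfalso
      refine hirr ⟨(1:ℚ)/2, ?_⟩
      rw [hc]
      norm_num
    · exact stmt10_case_gt α hc h1 hirr f hf0 hsum he1 he0 hsupp
  have hzero : ∀ x : ℝ, π {x} = 0 := by
    intro x
    have h := hall x
    simp only [hf] at h
    rcases (ENNReal.toReal_eq_zero_iff _).1 h with h' | h'
    · exact h'
    · exact absurd h' (hfin _)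
  exact ⟨hzero, hzero 0, fun n => hzero _⟩
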